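/- Let ξ_1,…,ξ_d and η_1,…,η_d be characters of ℤ_n such that the harmonic frames they determine are unitarily equivalent via a unitary map U and a bijection σ of ℤ_n (i.e., v_k = U w_{σk} for all k, where v_k = (ξ_j(k))_j and w_k = (η_j(k))_j). Then there exists a ∈ ℤ_n with Σ_{j=1}^d ξ_j(1) = Σ_{j=1}^d η_j(a). -/

import Mathlib

/-- If the harmonic frames determined by characters `ξ_1,…,ξ_d` and
`η_1,…,η_d` of `ℤ_n` are unitarily equivalent (via a unitary `U` and a
bijection `σ` of `ℤ_n`), then `∑ j, ξ j 1 = ∑ j, η j a` for some `a ∈ ℤ_n`. -/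
theorem unitarily_equivalent_harmonic_frames_sum_eq
    (n d : ℕ) [NeZero n]
    (ξ η : Fin d → AddChar (ZMod n) ℂ)
    (U : EuclideanSpace ℂ (Fin d) ≃ₗᵢ[ℂ] EuclideanSpace ℂ (Fin d))
    (σ : ZMod n ≃ ZMod n)
    (h : ∀ k : ZMod n,
      (WithLp.toLp 2 (fun j => ξ j k) : EuclideanSpace ℂ (Fin d))
        = U (WithLp.toLp 2 (fun j => η j (σ k)) : EuclideanSpace ℂ (Fin d))) :
    ∃ a : ZMod n, ∑ j, ξ j 1 = ∑ j, η j a := by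
  have hchar : 0 < ringChar (ZMod n) := by
    rw [ZMod.ringChar_zmod_n]
    exact Nat.pos_of_ne_zero (NeZero.ne n)
  have hconj : ∀ (χ : AddChar (ZMod n) ℂ) (x : ZMod n),
      (starRingEnd ℂ) (χ x) = χ (-x) := by
    intro χ x
    rw [AddChar.starComp_apply hchar, AddChar.inv_apply']
    rw [AddChar.map_neg_eq_inv]
  refine ⟨σ 1 - σ 0, ?_⟩
  have key := congrArg₂ (fun x y : EuclideanSpace ℂ (Fin d) => (inner ℂ x y : ℂ)) (h 0) (h 1)
  simp only [U.inner_map_map] at key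
  simp only [PiLp.inner_apply, PiLp.toLp_apply, RCLike.inner_apply'] at key
  calc ∑ j, ξ j 1
      = ∑ j, (starRingEnd ℂ) (ξ j 0) * ξ j 1 := by
        simp [AddChar.map_zero_eq_one]
    _ = ∑ j, (starRingEnd ℂ) (η j (σ 0)) * η j (σ 1) := key
    _ = ∑ j, η j (σ 1 - σ 0) := by
        refine Finset.sum_congr rfl fun j _ => ?_
        rw [hconj, ← AddChar.map_add_eq_mul]
        ring_nf
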